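/- Let K ⊆ G be finite abstract simplicial complexes and fix k ≥ 0. Let L_k(K) and L_k(G) be the k-form blocks of the Hodge Laplacians of K and G, of sizes f_k(K) × f_k(K) and f_k(G) × f_k(G) respectively, where f_k counts the elements of cardinality k+1. Then f_k(K) ≤ f_k(G) and the left-padded eigenvalue sequences satisfy: for every 1 ≤ j ≤ f_k(K), the j-th smallest eigenvalue of L_k(K) is at most the (f_k(G) − f_k(K) + j)-th smallest eigenvalue of L_k(G). -/

import Mathlib

open Matrix RealInnerProductSpace

/-- A finite abstract simplicial complex: a finite collection of nonempty finite
subsets of the totally ordered vertex set `ℕ`, closed under taking nonempty subsets. -/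
def IsComplex (G : Finset (Finset ℕ)) : Prop :=
  (∀ x ∈ G, x.Nonempty) ∧ ∀ x ∈ G, ∀ y ⊆ x, y.Nonempty → y ∈ G

/-- Entry of the exterior derivative: `(-1)^i` if `y ⊂ x`, `|x| = |y| + 1`, and the
unique vertex of `x \ y` sits at position `i` (0-based) in the increasing enumeration
of `x`; `0` otherwise.  (The sum over the singleton `x \ y` extracts that position.) -/
noncomputable def dEntry (x y : Finset ℕ) : ℝ :=
  if y ⊆ x ∧ x.card = y.card + 1 then
    (-1 : ℝ) ^ ((x \ y).sum fun v => (x.filter (fun w => w < v)).card)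
  else 0

/-- The exterior derivative of a complex, as a matrix indexed by the simplices. -/
noncomputable def extDer (G : Finset (Finset ℕ)) :
    Matrix {x // x ∈ G} {x // x ∈ G} ℝ :=
  Matrix.of fun x y => dEntry x.1 y.1

/-- The Dirac matrix `D = d + dᵀ`. -/
noncomputable def dirac (G : Finset (Finset ℕ)) :
    Matrix {x // x ∈ G} {x // x ∈ G} ℝ :=
  extDer G + (extDer G)ᵀ

/-- The Hodge Laplacian `L = D²`. -/
noncomputable def hodge (G : Finset (Finset ℕ)) :
    Matrix {x // x ∈ G} {x // x ∈ G} ℝ :=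
  dirac G * dirac G

/-- The ascending list of eigenvalues (with multiplicity) of a real symmetric matrix. -/
noncomputable def sortedEigs {m : Type*} [Fintype m] [DecidableEq m]
    (A : Matrix m m ℝ) : List ℝ :=
  if h : A.IsHermitian then (Finset.univ.val.map h.eigenvalues).sort (· ≤ ·) else []

/-- The `k`-form block of the Hodge Laplacian: the submatrix of `L` indexed by the
simplices of cardinality `k + 1`. -/
noncomputable def formBlock (G : Finset (Finset ℕ)) (k : ℕ) :
    Matrix {x // x ∈ G.filter fun s => s.card = k + 1}
           {x // x ∈ G.filter fun s => s.card = k + 1} ℝ :=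
  Matrix.of fun x y =>
    hodge G ⟨x.1, (Finset.mem_filter.mp x.2).1⟩ ⟨y.1, (Finset.mem_filter.mp y.2).1⟩

/-- `f_k`: the number of simplices of cardinality `k + 1`. -/
def fVec (G : Finset (Finset ℕ)) (k : ℕ) : ℕ :=
  (G.filter fun s => s.card = k + 1).card

/-- On the span of eigenvectors with eigenvalues ≤ r, the quadratic form is ≤ r ‖v‖². -/
lemma rayleigh_span_le {n ι : Type*} [Fintype n] (B : Matrix n n ℝ)
    (w : ι → EuclideanSpace ℝ n) (hw : Orthonormal ℝ w) (c : ι → ℝ)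
    (hBw : ∀ i, B *ᵥ (w i) = c i • (w i)) (S : Finset ι) (r : ℝ)
    (hr : ∀ i ∈ S, c i ≤ r) (v : EuclideanSpace ℝ n)
    (hv : v ∈ Submodule.span ℝ (w '' S)) :
    ⟪v, (WithLp.toLp 2 (B *ᵥ v) : EuclideanSpace ℝ n)⟫ ≤ r * ‖v‖ ^ 2 := by
  have hrange : (w '' S) = Set.range (fun i : S => w i) := by
    ext x
    simp [Set.mem_image, Set.mem_range, Subtype.exists]
  rw [hrange, Submodule.mem_span_range_iff_exists_fun] at hv
  obtain ⟨f, hf⟩ := hv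
  have hw' : Orthonormal ℝ (fun i : S => w i) := hw.comp _ Subtype.val_injective
  -- B *ᵥ v
  have hBv : (WithLp.toLp 2 (B *ᵥ v) : EuclideanSpace ℝ n) = ∑ i : S, (f i * c i) • w i := by
    rw [← hf]
    have : B *ᵥ (∑ i : S, f i • w i : EuclideanSpace ℝ n).ofLp
        = ∑ i : S, f i • (B *ᵥ (w i).ofLp) := by
      have h := map_sum (Matrix.mulVecLin B) (fun i : S => f i • (w i).ofLp) Finset.univ
      simp only [Matrix.mulVecLin_apply, _root_.map_smul] at h
      rw [WithLp.ofLp_sum]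
      simpa only [WithLp.ofLp_smul] using h
    rw [this]
    apply (WithLp.linearEquiv 2 ℝ (n → ℝ)).injective
    simp only [map_sum, WithLp.linearEquiv_apply]
    refine Finset.sum_congr rfl fun i _ => ?_
    rw [hBw i, smul_smul]
    rfl
  have h1 : ⟪v, (WithLp.toLp 2 (B *ᵥ v) : EuclideanSpace ℝ n)⟫ = ∑ i : S, f i * (f i * c i) := by
    rw [hBv, ← hf]
    simpa using hw'.inner_sum f (fun i => f i * c i) Finset.univ
  have h2 : ‖v‖ ^ 2 = ∑ i : S, f i * f i := by
    rw [← real_inner_self_eq_norm_sq, ← hf]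
    simpa using hw'.inner_sum f f Finset.univ
  rw [h1, h2, Finset.mul_sum]
  refine Finset.sum_le_sum fun i _ => ?_
  have := hr i.1 i.2
  nlinarith [sq_nonneg (f i)]

lemma sortedEigs_spec {n : Type*} [Fintype n] [DecidableEq n]
    (B : Matrix n n ℝ) (hB : B.IsHermitian) :
    ∃ (w : Fin (Fintype.card n) → EuclideanSpace ℝ n) (μ : Fin (Fintype.card n) → ℝ),
      Orthonormal ℝ w ∧ Monotone μ ∧ (∀ i, B *ᵥ (w i) = μ i • (w i)) ∧
      sortedEigs B = List.ofFn μ := by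
  set N := Fintype.card n
  let e : Fin N ≃ n := (Fintype.equivFin n).symm
  let g : Fin N → ℝ := hB.eigenvalues ∘ e
  let σ : Equiv.Perm (Fin N) := Tuple.sort g
  refine ⟨fun i => hB.eigenvectorBasis (e (σ i)), g ∘ σ,
    hB.eigenvectorBasis.orthonormal.comp _ ((e.injective).comp σ.injective),
    Tuple.monotone_sort g, fun i => hB.mulVec_eigenvectorBasis _, ?_⟩
  have hmult : (Finset.univ.val.map hB.eigenvalues) = ↑(List.ofFn (g ∘ σ)) := by
    have h1 : (List.ofFn (g ∘ σ) : Multiset ℝ)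
        = Multiset.map (g ∘ σ) (Finset.univ : Finset (Fin N)).val := by
      rw [List.ofFn_eq_map]
      rfl
    rw [h1]
    calc Multiset.map hB.eigenvalues Finset.univ.val
        = Multiset.map hB.eigenvalues ((Finset.univ.map (σ.trans e).toEmbedding).val) := by
          rw [Finset.map_univ_equiv]
      _ = Multiset.map (g ∘ σ) Finset.univ.val := by
          rw [Finset.map_val, Multiset.map_map]
          rfl
  rw [sortedEigs, dif_pos hB]
  refine (fun hp hs => List.Perm.eq_of_pairwise' (Multiset.pairwise_sort _ _) hs hp) ?_ ?_
  · rw [← Multiset.coe_eq_coe, Multiset.sort_eq, hmult]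
  · exact List.pairwise_ofFn.mpr fun i j hij => (Tuple.monotone_sort g) hij.le

lemma image_eq_range' {α β : Type*} (w : α → β) (S : Finset α) :
    (w '' S) = Set.range (fun i : S => w i) := by
  ext x; simp [Set.mem_image, Set.mem_range, Subtype.exists]

lemma rayleigh_span_ge {n ι : Type*} [Fintype n] (B : Matrix n n ℝ)
    (w : ι → EuclideanSpace ℝ n) (hw : Orthonormal ℝ w) (c : ι → ℝ)
    (hBw : ∀ i, B *ᵥ (w i) = c i • (w i)) (S : Finset ι) (r : ℝ)
    (hr : ∀ i ∈ S, r ≤ c i) (v : EuclideanSpace ℝ n)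
    (hv : v ∈ Submodule.span ℝ (w '' S)) :
    r * ‖v‖ ^ 2 ≤ ⟪v, (WithLp.toLp 2 (B *ᵥ v) : EuclideanSpace ℝ n)⟫ := by
  have h := rayleigh_span_le (-B) w hw (-c) (fun i => by
      rw [Matrix.neg_mulVec, hBw i, Pi.neg_apply, neg_smul]) S (-r)
      (fun i hi => neg_le_neg (hr i hi)) v hv
  have h2 : (WithLp.toLp 2 ((-B) *ᵥ v) : EuclideanSpace ℝ n) = -(WithLp.toLp 2 (B *ᵥ v) : EuclideanSpace ℝ n) := by
    rw [Matrix.neg_mulVec, WithLp.toLp_neg]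
  rw [h2, inner_neg_right] at h
  linarith

lemma key_interlace {m n : Type*} [Fintype m] [DecidableEq m] [Fintype n] [DecidableEq n]
    (A : Matrix m m ℝ) (B : Matrix n n ℝ) (hA : A.IsHermitian) (hB : B.IsHermitian)
    (ι : EuclideanSpace ℝ m →ₗ[ℝ] EuclideanSpace ℝ n)
    (hinj : Function.Injective ι) (hnorm : ∀ v, ‖ι v‖ = ‖v‖)
    (hQ : ∀ v : EuclideanSpace ℝ m,
      ⟪v, (WithLp.toLp 2 (A *ᵥ v) : EuclideanSpace ℝ m)⟫ ≤ ⟪ι v, (WithLp.toLp 2 (B *ᵥ (ι v)) : EuclideanSpace ℝ n)⟫)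
    (hmn : Fintype.card m ≤ Fintype.card n) (j : ℕ) (hj : j < Fintype.card m) :
    (sortedEigs A).getD j 0 ≤ (sortedEigs B).getD (Fintype.card n - Fintype.card m + j) 0 := by
  set M := Fintype.card m with hMdef
  set N := Fintype.card n with hNdef
  obtain ⟨wA, μA, hwA, hmA, hEA, hLA⟩ := sortedEigs_spec A hA
  obtain ⟨wB, μB, hwB, hmB, hEB, hLB⟩ := sortedEigs_spec B hB
  have hjB : N - M + j < N := by omega
  set jA : Fin M := ⟨j, hj⟩
  set jB : Fin N := ⟨N - M + j, hjB⟩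
  -- getD values
  have hgA : (sortedEigs A).getD j 0 = μA jA := by
    rw [hLA, List.getD_eq_getElem?_getD, List.getElem?_ofFn]
    rw [dif_pos (show j < Fintype.card m from hj)]; rfl
  have hgB : (sortedEigs B).getD (N - M + j) 0 = μB jB := by
    rw [hLB, List.getD_eq_getElem?_getD, List.getElem?_ofFn]
    rw [dif_pos (show N - M + j < Fintype.card n from hjB)]; rfl
  rw [hgA, hgB]
  -- spans
  set SA : Finset (Fin M) := Finset.Ici jA
  set SB : Finset (Fin N) := Finset.Iic jB
  have hliA : LinearIndependent ℝ (fun i : SA => ι (wA i)) := by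
    have h1 : LinearIndependent ℝ (fun i : SA => wA i) :=
      (hwA.comp ((↑) : SA → Fin M) Subtype.val_injective).linearIndependent
    exact h1.map' ι (LinearMap.ker_eq_bot.mpr hinj)
  have hliB : LinearIndependent ℝ (fun i : SB => wB i) :=
    (hwB.comp ((↑) : SB → Fin N) Subtype.val_injective).linearIndependent
  set W' : Submodule ℝ (EuclideanSpace ℝ n) :=
    Submodule.span ℝ (Set.range fun i : SA => ι (wA i))
  set WB : Submodule ℝ (EuclideanSpace ℝ n) :=
    Submodule.span ℝ (Set.range fun i : SB => wB i)
  have hrW' : Module.finrank ℝ W' = M - j := by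
    rw [finrank_span_eq_card hliA, Fintype.card_coe]
    simp [SA, jA]
  have hrWB : Module.finrank ℝ WB = N - M + j + 1 := by
    rw [finrank_span_eq_card hliB, Fintype.card_coe]
    simp [SB, jB]
  -- nonzero intersection
  have hfr : 0 < Module.finrank ℝ ↥(W' ⊓ WB) := by
    have hsup : Module.finrank ℝ ↥(W' ⊔ WB) ≤ N := by
      simpa [finrank_euclideanSpace] using (W' ⊔ WB).finrank_le
    have := Submodule.finrank_sup_add_finrank_inf_eq W' WB
    omega
  obtain ⟨x, hxmem, hxne⟩ : ∃ x, x ∈ W' ⊓ WB ∧ x ≠ 0 := by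
    obtain ⟨⟨x, hx⟩, hne⟩ := Module.finrank_pos_iff_exists_ne_zero.mp hfr
    exact ⟨x, hx, fun h => hne (by simpa using h)⟩
  obtain ⟨hxW', hxWB⟩ := hxmem
  -- pull back through ι
  have hW'map : W' = Submodule.map ι (Submodule.span ℝ (Set.range fun i : SA => wA i)) := by
    rw [LinearMap.map_span, ← Set.range_comp]
    rfl
  rw [hW'map] at hxW'
  obtain ⟨v, hvmem, hvx⟩ := hxW'
  have hvne : v ≠ 0 := fun h => hxne (by rw [← hvx, h, map_zero])
  -- Rayleigh bounds
  have hlow : μA jA * ‖v‖ ^ 2 ≤ ⟪v, (WithLp.toLp 2 (A *ᵥ v) : EuclideanSpace ℝ m)⟫ := by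
    refine rayleigh_span_ge A wA hwA μA hEA SA (μA jA)
      (fun i hi => hmA (Finset.mem_Ici.mp hi)) v ?_
    rwa [image_eq_range']
  have hup : ⟪x, (WithLp.toLp 2 (B *ᵥ x) : EuclideanSpace ℝ n)⟫ ≤ μB jB * ‖x‖ ^ 2 := by
    refine rayleigh_span_le B wB hwB μB hEB SB (μB jB)
      (fun i hi => hmB (Finset.mem_Iic.mp hi)) x ?_
    rwa [image_eq_range']
  have hmid : ⟪v, (WithLp.toLp 2 (A *ᵥ v) : EuclideanSpace ℝ m)⟫ ≤ ⟪x, (WithLp.toLp 2 (B *ᵥ x) : EuclideanSpace ℝ n)⟫ := by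
    rw [← hvx]; exact hQ v
  have hnx : ‖x‖ = ‖v‖ := by rw [← hvx]; exact hnorm v
  have hvn : ‖v‖ ≠ 0 := norm_ne_zero_iff.mpr hvne
  have hpos : 0 < ‖v‖ ^ 2 := by positivity
  rw [hnx] at hup
  nlinarith

noncomputable def DentS (a b : Finset ℕ) : ℝ := dEntry a b + dEntry b a

lemma DentS_comm (a b : Finset ℕ) : DentS a b = DentS b a := add_comm _ _

noncomputable def valf (H : Finset (Finset ℕ)) (k : ℕ)
    (v : {x // x ∈ H.filter fun s => s.card = k + 1} → ℝ) : Finset ℕ → ℝ :=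
  fun y => if h : y ∈ H.filter (fun s => s.card = k + 1) then v ⟨y, h⟩ else 0

lemma dirac_apply' (H : Finset (Finset ℕ)) (a b : {x // x ∈ H}) :
    dirac H a b = DentS a.1 b.1 := by
  simp [dirac, extDer, DentS, Matrix.add_apply, Matrix.transpose_apply]

lemma isHermitian_formBlock (H : Finset (Finset ℕ)) (k : ℕ) :
    (formBlock H k).IsHermitian := by
  have hD : (dirac H).IsHermitian := by
    ext a b
    simp [Matrix.conjTranspose_apply, dirac_apply', DentS_comm a.1 b.1]
  have hh : (hodge H).IsHermitian := by
    show (dirac H * dirac H)ᴴ = dirac H * dirac H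
    rw [Matrix.conjTranspose_mul, hD]
  ext x y
  simpa [formBlock, Matrix.conjTranspose_apply] using
    congrFun (congrFun hh ⟨x.1, (Finset.mem_filter.mp x.2).1⟩) ⟨y.1, (Finset.mem_filter.mp y.2).1⟩

lemma sum_sub {α β : Type*} [AddCommMonoid β] (s : Finset α) (g : α → β) :
    ∑ x : {x // x ∈ s}, g x.1 = ∑ x ∈ s, g x := by
  rw [Finset.univ_eq_attach, Finset.sum_attach]

lemma quad_eq_aux (H F : Finset (Finset ℕ)) (hFH : F ⊆ H)
    (M : Matrix {x // x ∈ F} {x // x ∈ F} ℝ)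
    (hM : ∀ x y : {x // x ∈ F}, M x y = ∑ z ∈ H, DentS x.1 z * DentS z y.1)
    (v : {x // x ∈ F} → ℝ) (w : Finset ℕ → ℝ)
    (hw0 : ∀ y ∉ F, w y = 0) (hwv : ∀ x : {x // x ∈ F}, w x.1 = v x) :
    v ⬝ᵥ (M *ᵥ v) = ∑ a ∈ H, (∑ y ∈ H, DentS a y * w y) ^ 2 := by
  classical
  calc v ⬝ᵥ (M *ᵥ v)
      = ∑ x : {x // x ∈ F}, w x.1 * ∑ y : {x // x ∈ F},
          ((∑ z ∈ H, DentS x.1 z * DentS z y.1) * w y.1) := by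
        simp only [dotProduct, Matrix.mulVec]
        refine Finset.sum_congr rfl fun x _ => ?_
        rw [hwv x]
        congr 1
        exact Finset.sum_congr rfl fun y _ => by rw [hM x y, hwv y]
    _ = ∑ x : {x // x ∈ F}, w x.1 * ∑ y ∈ F,
          ((∑ z ∈ H, DentS x.1 z * DentS z y) * w y) := by
        refine Finset.sum_congr rfl fun x _ => ?_
        congr 1
        exact sum_sub F (fun b => (∑ z ∈ H, DentS x.1 z * DentS z b) * w b)
    _ = ∑ x ∈ F, w x * ∑ y ∈ F, ((∑ z ∈ H, DentS x z * DentS z y) * w y) :=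
        sum_sub F (fun a => w a * ∑ y ∈ F, ((∑ z ∈ H, DentS a z * DentS z y) * w y))
    _ = ∑ x ∈ H, w x * ∑ y ∈ H, ((∑ z ∈ H, DentS x z * DentS z y) * w y) := by
        rw [Finset.sum_subset hFH (fun x _ hx => by rw [hw0 x hx, zero_mul])]
        refine Finset.sum_congr rfl fun x hx => ?_
        congr 1
        exact Finset.sum_subset hFH (fun y _ hy => by rw [hw0 y hy, mul_zero])
    _ = ∑ x ∈ H, ∑ y ∈ H, ∑ z ∈ H, w x * (DentS x z * DentS z y * w y) := by
        refine Finset.sum_congr rfl fun x _ => ?_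
        rw [Finset.mul_sum]
        refine Finset.sum_congr rfl fun y _ => ?_
        rw [Finset.sum_mul, Finset.mul_sum]
    _ = ∑ x ∈ H, ∑ z ∈ H, ∑ y ∈ H, w x * (DentS x z * DentS z y * w y) :=
        Finset.sum_congr rfl fun x _ => Finset.sum_comm
    _ = ∑ z ∈ H, ∑ x ∈ H, ∑ y ∈ H, w x * (DentS x z * DentS z y * w y) :=
        Finset.sum_comm
    _ = ∑ a ∈ H, (∑ y ∈ H, DentS a y * w y) ^ 2 := by
        refine Finset.sum_congr rfl fun z _ => ?_
        rw [sq, Finset.sum_mul_sum]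
        refine Finset.sum_congr rfl fun x _ => Finset.sum_congr rfl fun y _ => ?_
        rw [DentS_comm z x]
        ring

lemma quad_eq (H : Finset (Finset ℕ)) (k : ℕ)
    (v : {x // x ∈ H.filter fun s : Finset ℕ => s.card = k + 1} → ℝ) :
    v ⬝ᵥ ((formBlock H k) *ᵥ v)
      = ∑ a ∈ H, (∑ y ∈ H, DentS a y * valf H k v y) ^ 2 := by
  classical
  refine quad_eq_aux H (H.filter fun s : Finset ℕ => s.card = k + 1)
    (Finset.filter_subset _ _) (formBlock H k) ?_ v (valf H k v)
    (fun y hy => dif_neg hy) (fun x => dif_pos x.2)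
  intro x y
  rw [show formBlock H k x y
      = hodge H ⟨x.1, (Finset.mem_filter.mp x.2).1⟩ ⟨y.1, (Finset.mem_filter.mp y.2).1⟩ from rfl,
    hodge, Matrix.mul_apply,
    ← sum_sub H (fun a => DentS x.1 a * DentS a y.1)]
  exact Finset.sum_congr rfl fun z _ => by rw [dirac_apply', dirac_apply']

def padFun (K G : Finset (Finset ℕ)) (k : ℕ)
    (v : {x // x ∈ K.filter fun s : Finset ℕ => s.card = k + 1} → ℝ) :
    {x // x ∈ G.filter fun s : Finset ℕ => s.card = k + 1} → ℝ := fun x =>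
  if h : x.1 ∈ K.filter (fun s : Finset ℕ => s.card = k + 1) then v ⟨x.1, h⟩ else 0

lemma padFun_add (K G : Finset (Finset ℕ)) (k : ℕ) (u v) :
    padFun K G k (u + v) = padFun K G k u + padFun K G k v := by
  funext x
  by_cases h : x.1 ∈ K.filter (fun s : Finset ℕ => s.card = k + 1) <;>
    simp [padFun, h]

lemma padFun_smul (K G : Finset (Finset ℕ)) (k : ℕ) (c : ℝ) (v) :
    padFun K G k (c • v) = c • padFun K G k v := by
  funext x
  by_cases h : x.1 ∈ K.filter (fun s : Finset ℕ => s.card = k + 1) <;>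
    simp [padFun, h]

noncomputable def padMap (K G : Finset (Finset ℕ)) (k : ℕ) :
    EuclideanSpace ℝ {x // x ∈ K.filter fun s : Finset ℕ => s.card = k + 1} →ₗ[ℝ]
    EuclideanSpace ℝ {x // x ∈ G.filter fun s : Finset ℕ => s.card = k + 1} where
  toFun v := WithLp.toLp 2 (padFun K G k v)
  map_add' u v := by rw [WithLp.ofLp_add, padFun_add, WithLp.toLp_add]
  map_smul' c v := by rw [WithLp.ofLp_smul, padFun_smul, WithLp.toLp_smul]; rfl


section PadProps
variable (K G : Finset (Finset ℕ)) (k : ℕ)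

lemma valf_pad (hKG : K ⊆ G) (v) :
    valf G k (padMap K G k v) = valf K k v := by
  have hsub : (K.filter fun s : Finset ℕ => s.card = k + 1)
      ⊆ (G.filter fun s : Finset ℕ => s.card = k + 1) :=
    Finset.filter_subset_filter _ hKG
  funext y
  show (if h : y ∈ G.filter (fun s : Finset ℕ => s.card = k + 1)
      then padFun K G k v ⟨y, h⟩ else 0)
    = (if h : y ∈ K.filter (fun s : Finset ℕ => s.card = k + 1) then v ⟨y, h⟩ else 0)
  by_cases hg : y ∈ G.filter (fun s : Finset ℕ => s.card = k + 1)
  · rw [dif_pos hg]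
    rfl
  · rw [dif_neg hg, dif_neg (fun hc => hg (hsub hc))]

lemma padMap_injective (hKG : K ⊆ G) : Function.Injective (padMap K G k) := by
  intro u v h
  ext x
  have hx : x.1 ∈ G.filter (fun s : Finset ℕ => s.card = k + 1) :=
    Finset.filter_subset_filter _ hKG x.2
  have h2 := congrFun (congrArg WithLp.ofLp h) ⟨x.1, hx⟩
  show u ⟨x.1, x.2⟩ = v ⟨x.1, x.2⟩
  simpa [padMap, padFun, dif_pos x.2] using h2

lemma padMap_norm (hKG : K ⊆ G) (v) : ‖padMap K G k v‖ = ‖v‖ := by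
  have hsub : (K.filter fun s : Finset ℕ => s.card = k + 1)
      ⊆ (G.filter fun s : Finset ℕ => s.card = k + 1) :=
    Finset.filter_subset_filter _ hKG
  rw [EuclideanSpace.norm_eq, EuclideanSpace.norm_eq]
  congr 1
  calc ∑ x : {x // x ∈ G.filter fun s : Finset ℕ => s.card = k + 1},
        ‖padMap K G k v x‖ ^ 2
      = ∑ x : {x // x ∈ G.filter fun s : Finset ℕ => s.card = k + 1},
        ‖valf K k v x.1‖ ^ 2 := rfl
    _ = ∑ x ∈ G.filter fun s : Finset ℕ => s.card = k + 1, ‖valf K k v x‖ ^ 2 :=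
        sum_sub _ (fun a => ‖valf K k v a‖ ^ 2)
    _ = ∑ x ∈ K.filter fun s : Finset ℕ => s.card = k + 1, ‖valf K k v x‖ ^ 2 :=
        (Finset.sum_subset hsub (fun y _ hy => by
          rw [show valf K k v y = 0 from dif_neg hy]
          simp)).symm
    _ = ∑ x : {x // x ∈ K.filter fun s : Finset ℕ => s.card = k + 1},
        ‖valf K k v x.1‖ ^ 2 := (sum_sub _ (fun a => ‖valf K k v a‖ ^ 2)).symm
    _ = ∑ x : {x // x ∈ K.filter fun s : Finset ℕ => s.card = k + 1}, ‖v x‖ ^ 2 :=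
        Finset.sum_congr rfl fun x _ => by rw [show valf K k v x.1 = v x from dif_pos x.2]

lemma padMap_quad (hKG : K ⊆ G)
    (v : EuclideanSpace ℝ {x // x ∈ K.filter fun s : Finset ℕ => s.card = k + 1}) :
    ⟪v, (WithLp.toLp 2 ((formBlock K k) *ᵥ v) :
        EuclideanSpace ℝ {x // x ∈ K.filter fun s => s.card = k + 1})⟫
      ≤ ⟪padMap K G k v, (WithLp.toLp 2 ((formBlock G k) *ᵥ (padMap K G k v)) :
        EuclideanSpace ℝ {x // x ∈ G.filter fun s => s.card = k + 1})⟫ := by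
  have h1 : ⟪v, (WithLp.toLp 2 ((formBlock K k) *ᵥ v) :
      EuclideanSpace ℝ {x // x ∈ K.filter fun s => s.card = k + 1})⟫
      = v ⬝ᵥ ((formBlock K k) *ᵥ v) := by
    simp [PiLp.inner_apply, dotProduct, mul_comm]
  have h2 : ⟪padMap K G k v, (WithLp.toLp 2 ((formBlock G k) *ᵥ (padMap K G k v)) :
      EuclideanSpace ℝ {x // x ∈ G.filter fun s => s.card = k + 1})⟫
      = (padMap K G k v) ⬝ᵥ ((formBlock G k) *ᵥ (padMap K G k v)) := by
    simp [PiLp.inner_apply, dotProduct, mul_comm]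
  rw [h1, h2, quad_eq K k v, quad_eq G k (padMap K G k v), valf_pad K G k hKG v]
  have hw0 : ∀ y, y ∉ K → valf K k v y = 0 := fun y hy =>
    dif_neg (fun hc => hy (Finset.mem_filter.mp hc).1)
  calc ∑ a ∈ K, (∑ y ∈ K, DentS a y * valf K k v y) ^ 2
      = ∑ a ∈ K, (∑ y ∈ G, DentS a y * valf K k v y) ^ 2 :=
        Finset.sum_congr rfl fun a _ => by
          rw [Finset.sum_subset hKG (fun y _ hy => by rw [hw0 y hy, mul_zero])]
    _ ≤ ∑ a ∈ G, (∑ y ∈ G, DentS a y * valf K k v y) ^ 2 :=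
        Finset.sum_le_sum_of_subset_of_nonneg hKG (fun a _ _ => sq_nonneg _)

end PadProps

lemma form_monotonicity_aux (K G : Finset (Finset ℕ)) (hKG : K ⊆ G) (k : ℕ) :
    fVec K k ≤ fVec G k ∧
    ∀ j < fVec K k,
      (sortedEigs (formBlock K k)).getD j 0 ≤
        (sortedEigs (formBlock G k)).getD (fVec G k - fVec K k + j) 0 := by
  have hcK : Fintype.card {x // x ∈ K.filter fun s : Finset ℕ => s.card = k + 1} = fVec K k :=
    Fintype.card_coe _
  have hcG : Fintype.card {x // x ∈ G.filter fun s : Finset ℕ => s.card = k + 1} = fVec G k :=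
    Fintype.card_coe _
  have hmn : fVec K k ≤ fVec G k :=
    Finset.card_le_card (Finset.filter_subset_filter _ hKG)
  refine ⟨hmn, fun j hj => ?_⟩
  have h := key_interlace (formBlock K k) (formBlock G k)
    (isHermitian_formBlock K k) (isHermitian_formBlock G k)
    (padMap K G k) (padMap_injective K G k hKG) (padMap_norm K G k hKG)
    (padMap_quad K G k hKG) (by rw [hcK, hcG]; exact hmn) j (by rw [hcK]; exact hj)
  rwa [hcK, hcG] at h

/-- **Form monotonicity** (Corollary).  If `K ⊆ G` are finite abstract simplicial
complexes and `k ≥ 0`, then `f_k(K) ≤ f_k(G)` and the left-padded ascending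
eigenvalue sequences of the `k`-form blocks satisfy: for every `j < f_k(K)` (0-based),
the `j`-th smallest eigenvalue of `L_k(K)` is at most the
`(f_k(G) - f_k(K) + j)`-th smallest eigenvalue of `L_k(G)`. -/
theorem form_monotonicity (K G : Finset (Finset ℕ))
    (hK : IsComplex K) (hG : IsComplex G) (hKG : K ⊆ G) (k : ℕ) :
    fVec K k ≤ fVec G k ∧
    ∀ j < fVec K k,
      (sortedEigs (formBlock K k)).getD j 0 ≤
        (sortedEigs (formBlock G k)).getD (fVec G k - fVec K k + j) 0 := by
  exact form_monotonicity_aux K G hKG k
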